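/- (Halving step of the scaling lemma.) Let u : ℝ^d → N be Borel measurable. For every L > 0, ∬_{{(x,y) ∈ ℝ^d × ℝ^d : |x − y| ≤ L}} dist_N(u(x), u(y)) dx dy ≤ 2^{1+d} ∬_{{(x,z) ∈ ℝ^d × ℝ^d : |x − z| ≤ L/2}} dist_N(u(x), u(z)) dx dz. -/

import Mathlib

open MeasureTheory Set
open scoped ENNReal

/-- Substitution `y = 2 • z - x` for lower integrals w.r.t. an additive Haar measure. -/
lemma aux_sub {E : Type*} [NormedAddCommGroup E] [NormedSpace ℝ E] [MeasurableSpace E]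
    [BorelSpace E] [FiniteDimensional ℝ E] (μ : Measure E) [μ.IsAddHaarMeasure]
    (g : E → ℝ≥0∞) (hg : Measurable g) (x : E) :
    ∫⁻ y, g y ∂μ = (2 : ℝ≥0∞) ^ (Module.finrank ℝ E) * ∫⁻ z, g ((2:ℝ) • z - x) ∂μ := by
  have h2 : ((2:ℝ)) ≠ 0 := two_ne_zero
  have hgm : Measurable fun w => g (w - x) := hg.comp (measurable_id.sub_const x)
  have hmap : ∫⁻ z, g ((2:ℝ) • z - x) ∂μ
      = ∫⁻ w, g (w - x) ∂(Measure.map (((2:ℝ)) • ·) μ) := by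
    rw [lintegral_map hgm (measurable_const_smul _)]
  rw [hmap, Measure.map_addHaar_smul μ h2, lintegral_smul_measure]
  have htrans : ∫⁻ w, g (w - x) ∂μ = ∫⁻ w, g w ∂μ := by
    simp_rw [sub_eq_add_neg]
    exact lintegral_add_right_eq_self g (-x)
  rw [htrans]
  have hofReal : ENNReal.ofReal |((2:ℝ) ^ Module.finrank ℝ E)⁻¹|
      = ((2:ℝ≥0∞) ^ Module.finrank ℝ E)⁻¹ := by
    rw [abs_of_pos (by positivity), ENNReal.ofReal_inv_of_pos (by positivity),
      ENNReal.ofReal_pow (by norm_num)]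
    norm_num
  rw [hofReal, smul_eq_mul, ← mul_assoc, ENNReal.mul_inv_cancel (by positivity) (by simp), one_mul]

/-- General halving step over an additive Haar measure on a finite-dimensional space. -/
lemma aux_main {E : Type*} [NormedAddCommGroup E] [NormedSpace ℝ E] [MeasurableSpace E]
    [BorelSpace E] [FiniteDimensional ℝ E] (μ : Measure E) [μ.IsAddHaarMeasure] [SFinite μ]
    {N : Type*} [MetricSpace N] [TopologicalSpace.SeparableSpace N]
    [MeasurableSpace N] [BorelSpace N]
    (u : E → N) (hu : Measurable u) (L : ℝ) (hL : 0 < L) :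
    (∫⁻ p in {p : E × E | dist p.1 p.2 ≤ L}, edist (u p.1) (u p.2) ∂(μ.prod μ))
      ≤ 2 ^ (1 + Module.finrank ℝ E)
          * ∫⁻ p in {p : E × E | dist p.1 p.2 ≤ L / 2}, edist (u p.1) (u p.2) ∂(μ.prod μ) := by
  classical
  haveI : SecondCountableTopology N := UniformSpace.secondCountable_of_separable N
  set m : E × E → E := fun p => (2⁻¹ : ℝ) • (p.1 + p.2) with hm_def
  have hm : Measurable m := (measurable_fst.add measurable_snd).const_smul _
  have hS : ∀ r : ℝ, MeasurableSet {p : E × E | dist p.1 p.2 ≤ r} := fun r =>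
    measurableSet_le (measurable_fst.dist measurable_snd) measurable_const
  have hf : Measurable fun p : E × E => edist (u p.1) (u p.2) := by fun_prop
  have hA : Measurable fun p : E × E => edist (u p.1) (u (m p)) := by fun_prop
  have hB : Measurable fun p : E × E => edist (u (m p)) (u p.2) := by fun_prop
  set SL := {p : E × E | dist p.1 p.2 ≤ L} with hSL
  set SL2 := {p : E × E | dist p.1 p.2 ≤ L / 2} with hSL2
  -- Step 1 : triangle inequality
  have h1 : (∫⁻ p in SL, edist (u p.1) (u p.2) ∂(μ.prod μ))
      ≤ (∫⁻ p in SL, edist (u p.1) (u (m p)) ∂(μ.prod μ))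
        + ∫⁻ p in SL, edist (u (m p)) (u p.2) ∂(μ.prod μ) := by
    rw [← lintegral_add_left hA]
    exact lintegral_mono fun p => edist_triangle _ _ _
  -- Step 2 : symmetry via swap
  have h2 : (∫⁻ p in SL, edist (u (m p)) (u p.2) ∂(μ.prod μ))
      = ∫⁻ p in SL, edist (u p.1) (u (m p)) ∂(μ.prod μ) := by
    rw [← lintegral_indicator (hS L), ← lintegral_indicator (hS L)]
    have key : ∀ p : E × E,
        SL.indicator (fun p => edist (u (m p)) (u p.2)) p
          = SL.indicator (fun p : E × E => edist (u p.1) (u (m p))) (Prod.swap p) := by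
      intro p
      have hmem : p ∈ SL ↔ Prod.swap p ∈ SL := by
        simp only [hSL, mem_setOf_eq, Prod.fst_swap, Prod.snd_swap, dist_comm]
      have hmsw : m (Prod.swap p) = m p := by
        simp only [hm_def, Prod.fst_swap, Prod.snd_swap, add_comm]
      by_cases h : p ∈ SL
      · rw [indicator_of_mem h, indicator_of_mem (hmem.mp h)]
        simp only [Prod.fst_swap, hmsw, edist_comm]
      · rw [indicator_of_notMem h, indicator_of_notMem (fun hc => h (hmem.mpr hc))]
    calc ∫⁻ p, SL.indicator (fun p => edist (u (m p)) (u p.2)) p ∂(μ.prod μ)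
        = ∫⁻ p, SL.indicator (fun p : E × E => edist (u p.1) (u (m p))) (Prod.swap p)
            ∂(μ.prod μ) := lintegral_congr key
      _ = ∫⁻ p, SL.indicator (fun p : E × E => edist (u p.1) (u (m p))) p ∂(μ.prod μ) :=
          lintegral_prod_swap _
  -- Step 3 : substitution y = 2z - x
  have h3 : (∫⁻ p in SL, edist (u p.1) (u (m p)) ∂(μ.prod μ))
      = (2 : ℝ≥0∞) ^ (Module.finrank ℝ E)
          * ∫⁻ p in SL2, edist (u p.1) (u p.2) ∂(μ.prod μ) := by
    rw [← lintegral_indicator (hS L), ← lintegral_indicator (hS (L/2))]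
    have hFA : Measurable (SL.indicator fun p : E × E => edist (u p.1) (u (m p))) :=
      hA.indicator (hS L)
    have hFB : Measurable (SL2.indicator fun p : E × E => edist (u p.1) (u p.2)) :=
      hf.indicator (hS (L/2))
    rw [lintegral_prod _ hFA.aemeasurable, lintegral_prod _ hFB.aemeasurable,
      ← lintegral_const_mul' _ _ (by simp)]
    refine lintegral_congr fun x => ?_
    have hGx : Measurable fun y : E =>
        SL.indicator (fun p : E × E => edist (u p.1) (u (m p))) (x, y) :=
      hFA.comp measurable_prodMk_left
    rw [aux_sub μ _ hGx x]
    refine congrArg (fun t => (2:ℝ≥0∞) ^ (Module.finrank ℝ E) * t)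
      (lintegral_congr fun z => ?_)
    have hsub : (x : E) + ((2:ℝ) • z - x) = (2:ℝ) • z := by abel
    have hmid : m (x, (2:ℝ) • z - x) = z := by
      simp only [hm_def, hsub, smul_smul]
      norm_num
    have hdist : dist x ((2:ℝ) • z - x) = 2 * dist x z := by
      rw [dist_eq_norm, dist_eq_norm]
      have hh : x - ((2:ℝ) • z - x) = (2:ℝ) • (x - z) := by
        rw [smul_sub, two_smul, two_smul]; abel
      rw [hh, norm_smul]
      norm_num
    by_cases h : dist x z ≤ L / 2
    · have h1' : ((x, (2:ℝ) • z - x) : E × E) ∈ SL := by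
        simp only [hSL, mem_setOf_eq, hdist]; linarith
      have h2' : ((x, z) : E × E) ∈ SL2 := h
      rw [indicator_of_mem h1', indicator_of_mem h2', hmid]
    · have h1' : ((x, (2:ℝ) • z - x) : E × E) ∉ SL := by
        simp only [hSL, mem_setOf_eq, hdist]
        intro hc; exact h (by linarith)
      have h2' : ((x, z) : E × E) ∉ SL2 := h
      rw [indicator_of_notMem h1', indicator_of_notMem h2']
  calc (∫⁻ p in SL, edist (u p.1) (u p.2) ∂(μ.prod μ))
      ≤ (∫⁻ p in SL, edist (u p.1) (u (m p)) ∂(μ.prod μ))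
        + ∫⁻ p in SL, edist (u (m p)) (u p.2) ∂(μ.prod μ) := h1
    _ = 2 * ∫⁻ p in SL, edist (u p.1) (u (m p)) ∂(μ.prod μ) := by rw [h2, two_mul]
    _ = 2 ^ (1 + Module.finrank ℝ E)
          * ∫⁻ p in SL2, edist (u p.1) (u p.2) ∂(μ.prod μ) := by
        rw [h3, pow_add, pow_one, mul_assoc]

/-- Halving step of the scaling lemma: for `L > 0`,
`∬_{|x-y| ≤ L} dist (u x) (u y) ≤ 2^{1+d} ∬_{|x-z| ≤ L/2} dist (u x) (u z)`. -/
theorem stmt_13 (d : ℕ) (hd : 1 ≤ d)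
    {N : Type*} [MetricSpace N] [CompleteSpace N] [TopologicalSpace.SeparableSpace N]
    [MeasurableSpace N] [BorelSpace N]
    (u : EuclideanSpace ℝ (Fin d) → N) (hu : Measurable u)
    (L : ℝ) (hL : 0 < L) :
    (∫⁻ p in {p : EuclideanSpace ℝ (Fin d) × EuclideanSpace ℝ (Fin d) |
        dist p.1 p.2 ≤ L}, edist (u p.1) (u p.2))
      ≤ 2 ^ (1 + d)
          * ∫⁻ p in {p : EuclideanSpace ℝ (Fin d) × EuclideanSpace ℝ (Fin d) |
              dist p.1 p.2 ≤ L / 2}, edist (u p.1) (u p.2) := by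
  have h := aux_main (volume : Measure (EuclideanSpace ℝ (Fin d))) u hu L hL
  rw [finrank_euclideanSpace_fin] at h
  rw [Measure.volume_eq_prod]
  exact h
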